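/- Let ⟨G, Eℓ⟩ be a two-player game graph with live edges and let R = {(G_1, R_1), …, (G_k, R_k)} be a Rabin condition satisfying the chain condition R_1 ⊇ R_2 ⊇ … ⊇ R_k and G_1 ⊇ G_2 ⊇ … ⊇ G_k. Let Z* be the value of the permutation-based Rabin fixpoint: with p_0 := 0, G_{p_0} := ∅, R_{p_0} := ∅, Z* := νY_{p_0}. μX_{p_0}. ⋃_{p_1 ∈ P} νY_{p_1}. μX_{p_1}. ⋯ ⋃_{p_k ∈ P∖{p_1,…,p_{k−1}}} νY_{p_k}. μX_{p_k}. ⋃_{j=0}^{k} C_{p_j}, where C_{p_j} := ( ⋂_{i=0}^{j} (V ∖ R_{p_i}) ) ∩ [ (G_{p_j} ∩ Cpre(Y_{p_j})) ∪ Apre(Y_{p_j}, X_{p_j}) ] and P = {1,…,k}. Let Z̃* be the value of the chain fixpoint: with G_0 := ∅, R_0 := ∅, Z̃* := νY_0. μX_0. νY_k. μX_k. νY_{k−1}. μX_{k−1}. ⋯ νY_1. μX_1. ⋃_{j=0}^{k} C̃_j, where C̃_j := (V ∖ R_j) ∩ [ (G_j ∩ Cpre(Y_j)) ∪ Apre(Y_j,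 X_j) ]. Then Z* = Z̃*. -/

import Mathlib

/-- Least fixed point of a set transformer (Knaster–Tarski form). -/
def lfpSet {V : Type*} (f : Set V → Set V) : Set V := sInf {X | f X ⊆ X}

/-- Greatest fixed point of a set transformer (Knaster–Tarski form). -/
def gfpSet {V : Type*} (f : Set V → Set V) : Set V := sSup {X | X ⊆ f X}

/-- A two-player game graph with live edges: vertices are partitioned into
Player-0 vertices `V0` and Player-1 vertices `V1`, every vertex has a successor,
and live edges `El` are Player-1 edges. -/
structure LiveGameGraph (V : Type*) where
  V0 : Set V
  V1 : Set V
  E : V → V → Prop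
  El : V → V → Prop
  cover : V0 ∪ V1 = Set.univ
  disj : V0 ∩ V1 = ∅
  succ_nonempty : ∀ v : V, ∃ w, E v w
  live_sub : ∀ v w, El v w → v ∈ V1 ∧ E v w

namespace LiveGameGraph

variable {V : Type*}

/-- Pre∃0(S) -/
def pre0 (Gm : LiveGameGraph V) (S : Set V) : Set V :=
  {v | v ∈ Gm.V0 ∧ ∃ w, Gm.E v w ∧ w ∈ S}

/-- Pre∀1(S) -/
def pre1 (Gm : LiveGameGraph V) (S : Set V) : Set V :=
  {v | v ∈ Gm.V1 ∧ ∀ w, Gm.E v w → w ∈ S}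

/-- Cpre(S) -/
def cpre (Gm : LiveGameGraph V) (S : Set V) : Set V := Gm.pre0 S ∪ Gm.pre1 S

/-- Lpre∃(T) -/
def lpre (Gm : LiveGameGraph V) (T : Set V) : Set V :=
  {v | ∃ w, Gm.El v w ∧ w ∈ T}

/-- Apre(S,T) -/
def apre (Gm : LiveGameGraph V) (S T : Set V) : Set V :=
  Gm.cpre T ∪ (Gm.lpre T ∩ Gm.pre1 S)

end LiveGameGraph

namespace LiveGameGraph

variable {V : Type*}

/-- The nested permutation-based Rabin fixpoint, recursively peeling off one
permutation index at a time.  `avail` is the set of still-unchosen pair indices,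
`Qcur` is the intersection ⋂ R̄ over the already-chosen prefix, and `acc` is the
union of the `C` terms of the already-chosen prefix (with their bound `Y`/`X`
values substituted in). -/
def rabinAux (Gm : LiveGameGraph V) (Gp Rp : ℕ → Set V) :
    ℕ → Finset ℕ → Set V → Set V → Set V
  | 0, _, _, acc => acc
  | n + 1, avail, Qcur, acc =>
      ⋃ p ∈ avail,
        gfpSet fun Y => lfpSet fun X =>
          Gm.rabinAux Gp Rp n (avail.erase p) (Qcur ∩ (Rp p)ᶜ)
            (acc ∪ ((Qcur ∩ (Rp p)ᶜ) ∩ ((Gp p ∩ Gm.cpre Y) ∪ Gm.apre Y X)))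

/-- The full permutation-based Rabin fixpoint Z* for pairs (G_1,R_1),…,(G_k,R_k),
with the artificial pair p_0 = 0, G_0 = ∅, R_0 = ∅ handled by the outermost
νY_0. μX_0. -/
def rabinZ (Gm : LiveGameGraph V) (Gp Rp : ℕ → Set V) (k : ℕ) : Set V :=
  gfpSet fun Y0 => lfpSet fun X0 =>
    Gm.rabinAux Gp Rp k (Finset.Icc 1 k) ((∅ : Set V)ᶜ)
      (((∅ : Set V)ᶜ) ∩ (((∅ : Set V) ∩ Gm.cpre Y0) ∪ Gm.apre Y0 X0))

end LiveGameGraph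

namespace LiveGameGraph

variable {V : Type*}

/-- The chain fixpoint νY_k.μX_k. … νY_1.μX_1 peeled off one index at a time,
from index `j` down to index `1`; `acc` is the union of the `C̃` terms for the
already-bound indices (with their bound `Y`/`X` values substituted in). -/
def chainAux (Gm : LiveGameGraph V) (Gp Rp : ℕ → Set V) : ℕ → Set V → Set V
  | 0, acc => acc
  | j + 1, acc =>
      gfpSet fun Y => lfpSet fun X =>
        Gm.chainAux Gp Rp j
          (acc ∪ ((Rp (j + 1))ᶜ ∩ ((Gp (j + 1) ∩ Gm.cpre Y) ∪ Gm.apre Y X)))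

/-- The full chain fixpoint Z̃* = νY_0.μX_0.νY_k.μX_k. … νY_1.μX_1. ⋃_j C̃_j for
pairs (G_1,R_1),…,(G_k,R_k), with the artificial pair G_0 = ∅, R_0 = ∅. -/
def chainZ (Gm : LiveGameGraph V) (Gp Rp : ℕ → Set V) (k : ℕ) : Set V :=
  gfpSet fun Y0 => lfpSet fun X0 =>
    Gm.chainAux Gp Rp k
      (((∅ : Set V)ᶜ) ∩ (((∅ : Set V) ∩ Gm.cpre Y0) ∪ Gm.apre Y0 X0))

end LiveGameGraph


/-! ### Auxiliary fixpoint lemmas -/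

section FP
variable {V : Type*}

theorem lfpSet_le {f : Set V → Set V} {T : Set V} (h : f T ⊆ T) : lfpSet f ⊆ T := sInf_le h

theorem le_gfpSet {f : Set V → Set V} {W : Set V} (h : W ⊆ f W) : W ⊆ gfpSet f := le_sSup h

theorem lfpSet_mono {f g : Set V → Set V} (h : ∀ X, f X ⊆ g X) : lfpSet f ⊆ lfpSet g :=
  sInf_le_sInf fun X hX => (h X).trans hX

theorem gfpSet_mono {f g : Set V → Set V} (h : ∀ X, f X ⊆ g X) : gfpSet f ⊆ gfpSet g :=
  sSup_le_sSup fun X hX => le_trans hX (h X)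

theorem lfpSet_fixed {f : Set V → Set V} (hf : Monotone f) : lfpSet f = f (lfpSet f) := by
  have h1 : f (lfpSet f) ⊆ lfpSet f := by
    apply le_sInf
    intro X hX
    exact (hf (sInf_le hX)).trans hX
  exact le_antisymm (sInf_le (hf h1)) h1

theorem gfpSet_fixed {f : Set V → Set V} (hf : Monotone f) : gfpSet f = f (gfpSet f) := by
  have h1 : gfpSet f ⊆ f (gfpSet f) := sSup_le fun X hX => le_trans hX (hf (le_sSup hX))
  exact le_antisymm h1 (le_sSup (hf h1))

theorem gfpSet_eq_iterate [Fintype V] {f : Set V → Set V} (hf : Monotone f) :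
    ∃ j, f^[j] Set.univ = gfpSet f := by
  have hanti : ∀ j, f^[j + 1] Set.univ ⊆ f^[j] Set.univ := by
    intro j
    induction j with
    | zero => exact Set.subset_univ _
    | succ n ih =>
      calc f^[n + 1 + 1] Set.univ = f (f^[n + 1] Set.univ) := Function.iterate_succ_apply' f _ _
        _ ⊆ f (f^[n] Set.univ) := hf ih
        _ = f^[n + 1] Set.univ := (Function.iterate_succ_apply' f _ _).symm
  have hle : ∀ j, gfpSet f ⊆ f^[j] Set.univ := by
    intro j
    induction j with
    | zero => exact Set.subset_univ _
    | succ n ih =>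
      rw [Function.iterate_succ_apply']
      exact le_trans (gfpSet_fixed hf).le (hf ih)
  have hstab : ∃ j, f^[j + 1] Set.univ = f^[j] Set.univ := by
    by_contra hcon
    push_neg at hcon
    have hlt : ∀ j, (f^[j + 1] Set.univ).ncard < (f^[j] Set.univ).ncard := fun j =>
      Set.ncard_lt_ncard (HasSubset.Subset.ssubset_of_ne (hanti j) (hcon j)) (Set.toFinite _)
    have hbound : ∀ j, (f^[j] Set.univ).ncard + j ≤ (f^[0] Set.univ).ncard := by
      intro j
      induction j with
      | zero => omega
      | succ n ih => have := hlt n; omega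
    have := hbound ((f^[0] Set.univ).ncard + 1)
    omega
  obtain ⟨j, hj⟩ := hstab
  refine ⟨j, le_antisymm ?_ (hle j)⟩
  apply le_gfpSet
  have h2 : f (f^[j] Set.univ) = f^[j] Set.univ :=
    (Function.iterate_succ_apply' f j Set.univ).symm.trans hj
  exact h2.symm.le

end FP

/-! ### Monotonicity of the game predecessor operators -/

namespace LiveGameGraph
variable {V : Type*} (Gm : LiveGameGraph V)

theorem pre0_mono {S T : Set V} (h : S ⊆ T) : Gm.pre0 S ⊆ Gm.pre0 T := by
  rintro v ⟨hv, w, hw, hwS⟩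
  exact ⟨hv, w, hw, h hwS⟩

theorem pre1_mono {S T : Set V} (h : S ⊆ T) : Gm.pre1 S ⊆ Gm.pre1 T := by
  rintro v ⟨hv, hall⟩
  exact ⟨hv, fun w hw => h (hall w hw)⟩

theorem cpre_mono {S T : Set V} (h : S ⊆ T) : Gm.cpre S ⊆ Gm.cpre T :=
  Set.union_subset_union (Gm.pre0_mono h) (Gm.pre1_mono h)

theorem lpre_mono {S T : Set V} (h : S ⊆ T) : Gm.lpre S ⊆ Gm.lpre T := by
  rintro v ⟨w, hw, hwS⟩
  exact ⟨w, hw, h hwS⟩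

theorem apre_mono {Y Y' X X' : Set V} (hY : Y ⊆ Y') (hX : X ⊆ X') :
    Gm.apre Y X ⊆ Gm.apre Y' X' :=
  Set.union_subset_union (Gm.cpre_mono hX)
    (Set.inter_subset_inter (Gm.lpre_mono hX) (Gm.pre1_mono hY))

theorem C_mono (q g : Set V) {Y Y' X X' : Set V} (hY : Y ⊆ Y') (hX : X ⊆ X') :
    q ∩ ((g ∩ Gm.cpre Y) ∪ Gm.apre Y X) ⊆ q ∩ ((g ∩ Gm.cpre Y') ∪ Gm.apre Y' X') :=
  Set.inter_subset_inter subset_rfl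
    (Set.union_subset_union (Set.inter_subset_inter subset_rfl (Gm.cpre_mono hY))
      (Gm.apre_mono hY hX))

end LiveGameGraph

/-! ### The key swap lemma -/

section Swap
variable {V : Type*} [Fintype V]

theorem swap_aux (H : Set V → Set V) (Ka Kb Ko : Set V → Set V → Set V)
    (B : Set V → Set V → Set V)
    (hH : Monotone H)
    (hKa : ∀ {Y Y' X X' : Set V}, Y ⊆ Y' → X ⊆ X' → Ka Y X ⊆ Ka Y' X')
    (hKb : ∀ {Y Y' X X' : Set V}, Y ⊆ Y' → X ⊆ X' → Kb Y X ⊆ Kb Y' X')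
    (hKo : ∀ {Y Y' X X' : Set V}, Y ⊆ Y' → X ⊆ X' → Ko Y X ⊆ Ko Y' X')
    (hdom : ∀ {Y Y' X : Set V}, Y ⊆ Y' → Kb Y X ⊆ Ka Y' X)
    (hBdef : ∀ Ya Xa, B Ya Xa = gfpSet fun Yb => lfpSet fun Xb => H (Ka Ya Xa ∪ Kb Yb Xb)) :
    (gfpSet fun Ya => lfpSet fun Xa => B Ya Xa) ⊆
      gfpSet fun Yb => lfpSet fun Xb => gfpSet fun Ya => lfpSet fun Xa =>
        H (Ko Yb Xb ∪ Ka Ya Xa) := by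
  have hBmono : ∀ {Y Y' X X' : Set V}, Y ⊆ Y' → X ⊆ X' → B Y X ⊆ B Y' X' := by
    intro Y Y' X X' hY hX
    rw [hBdef, hBdef]
    exact gfpSet_mono fun Yb => lfpSet_mono fun Xb =>
      hH (Set.union_subset_union (hKa hY hX) subset_rfl)
  set W : Set V := gfpSet fun Ya => lfpSet fun Xa => B Ya Xa with hWdef
  have hWmonoA : Monotone fun Ya => lfpSet fun Xa => B Ya Xa :=
    fun Y Y' h => lfpSet_mono fun Xa => hBmono h subset_rfl
  have hWfix : W = lfpSet fun Xa => B W Xa := by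
    rw [hWdef]
    exact gfpSet_fixed hWmonoA
  set T : Set V := lfpSet fun Xb => gfpSet fun Ya => lfpSet fun Xa =>
      H (Ko W Xb ∪ Ka Ya Xa) with hTdef
  have hPm : Monotone fun Xb => gfpSet fun Ya => lfpSet fun Xa => H (Ko W Xb ∪ Ka Ya Xa) :=
    fun X X' h => gfpSet_mono fun Ya => lfpSet_mono fun Xa =>
      hH (Set.union_subset_union (hKo subset_rfl h) subset_rfl)
  set G : Set V → Set V := fun Ya => lfpSet fun Xa => H (Ko W T ∪ Ka Ya Xa) with hGdef
  have hTfix : T = gfpSet G := by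
    rw [hGdef, hTdef]
    exact lfpSet_fixed hPm
  have hGmono : Monotone G := by
    intro Y Y' h
    rw [hGdef]
    exact lfpSet_mono fun Xa => hH (Set.union_subset_union subset_rfl (hKa h subset_rfl))
  have hGanti : ∀ n, G^[n + 1] Set.univ ⊆ G^[n] Set.univ := by
    intro n
    induction n with
    | zero => exact Set.subset_univ _
    | succ n ih =>
      calc G^[n + 1 + 1] Set.univ = G (G^[n + 1] Set.univ) := Function.iterate_succ_apply' G _ _
        _ ⊆ G (G^[n] Set.univ) := hGmono ih
        _ = G^[n + 1] Set.univ := (Function.iterate_succ_apply' G _ _).symm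
  have dagger : ∀ n, B W (G^[n] Set.univ) ⊆ G^[n] Set.univ := by
    intro n
    induction n with
    | zero => exact Set.subset_univ _
    | succ n ih =>
      have hWTn : W ⊆ G^[n] Set.univ := by
        rw [hWfix]
        exact lfpSet_le ih
      have hMG : G^[n + 1] Set.univ = G (G^[n] Set.univ) := Function.iterate_succ_apply' G _ _
      have hMmono : Monotone fun Xa => H (Ko W T ∪ Ka (G^[n] Set.univ) Xa) :=
        fun X X' h => hH (Set.union_subset_union subset_rfl (hKa subset_rfl h))
      have hMfix : G^[n + 1] Set.univ =
          H (Ko W T ∪ Ka (G^[n] Set.univ) (G^[n + 1] Set.univ)) := by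
        rw [hMG, hGdef]
        exact lfpSet_fixed hMmono
      have hNTn : B W (G^[n + 1] Set.univ) ⊆ G^[n] Set.univ :=
        le_trans (hBmono subset_rfl (hGanti n)) ih
      have hNmono : Monotone fun Yb => lfpSet fun Xb =>
          H (Ka W (G^[n + 1] Set.univ) ∪ Kb Yb Xb) :=
        fun Y Y' h => lfpSet_mono fun Xb =>
          hH (Set.union_subset_union subset_rfl (hKb h subset_rfl))
      have hNfix : B W (G^[n + 1] Set.univ) = lfpSet fun Xb =>
          H (Ka W (G^[n + 1] Set.univ) ∪ Kb (B W (G^[n + 1] Set.univ)) Xb) := by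
        rw [hBdef]
        exact gfpSet_fixed hNmono
      rw [hNfix]
      apply lfpSet_le
      calc H (Ka W (G^[n + 1] Set.univ) ∪
              Kb (B W (G^[n + 1] Set.univ)) (G^[n + 1] Set.univ))
          ⊆ H (Ko W T ∪ Ka (G^[n] Set.univ) (G^[n + 1] Set.univ)) := by
            apply hH
            apply Set.union_subset
            · exact le_trans (hKa hWTn subset_rfl) Set.subset_union_right
            · exact le_trans (hdom hNTn) Set.subset_union_right
        _ = G^[n + 1] Set.univ := hMfix.symm
  have hWT : W ⊆ T := by
    obtain ⟨j, hj⟩ := gfpSet_eq_iterate hGmono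
    have h1 : W ⊆ G^[j] Set.univ := by
      rw [hWfix]
      exact lfpSet_le (dagger j)
    rw [hj, ← hTfix] at h1
    exact h1
  apply le_gfpSet
  show W ⊆ lfpSet fun Xb => gfpSet fun Ya => lfpSet fun Xa => H (Ko W Xb ∪ Ka Ya Xa)
  rw [← hTdef]
  exact hWT

theorem swap_abstract (H : Set V → Set V) (Ka Kb Ko : Set V → Set V → Set V)
    (hH : Monotone H)
    (hKa : ∀ {Y Y' X X' : Set V}, Y ⊆ Y' → X ⊆ X' → Ka Y X ⊆ Ka Y' X')
    (hKb : ∀ {Y Y' X X' : Set V}, Y ⊆ Y' → X ⊆ X' → Kb Y X ⊆ Kb Y' X')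
    (hKo : ∀ {Y Y' X X' : Set V}, Y ⊆ Y' → X ⊆ X' → Ko Y X ⊆ Ko Y' X')
    (hdom : ∀ {Y Y' X : Set V}, Y ⊆ Y' → Kb Y X ⊆ Ka Y' X) :
    (gfpSet fun Ya => lfpSet fun Xa => gfpSet fun Yb => lfpSet fun Xb =>
        H (Ka Ya Xa ∪ Kb Yb Xb)) ⊆
      gfpSet fun Yb => lfpSet fun Xb => gfpSet fun Ya => lfpSet fun Xa =>
        H (Ko Yb Xb ∪ Ka Ya Xa) :=
  swap_aux H Ka Kb Ko
    (fun Ya Xa => gfpSet fun Yb => lfpSet fun Xb => H (Ka Ya Xa ∪ Kb Yb Xb))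
    hH hKa hKb hKo hdom (fun _ _ => rfl)

end Swap

/-! ### List-indexed nested fixpoint -/

def listVal {V : Type*} (Gm : LiveGameGraph V) (Gp Rp : ℕ → Set V) :
    List ℕ → Set V → Set V → Set V
  | [], _, acc => acc
  | p :: l, Q, acc =>
      gfpSet fun Y => lfpSet fun X =>
        listVal Gm Gp Rp l (Q ∩ (Rp p)ᶜ)
          (acc ∪ ((Q ∩ (Rp p)ᶜ) ∩ ((Gp p ∩ Gm.cpre Y) ∪ Gm.apre Y X)))

theorem listVal_mono {V : Type*} (Gm : LiveGameGraph V) (Gp Rp : ℕ → Set V) :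
    ∀ (l : List ℕ) {Q Q' acc acc' : Set V}, Q ⊆ Q' → acc ⊆ acc' →
      listVal Gm Gp Rp l Q acc ⊆ listVal Gm Gp Rp l Q' acc' := by
  intro l
  induction l with
  | nil => intro Q Q' acc acc' _ hacc; exact hacc
  | cons p l ih =>
    intro Q Q' acc acc' hQ hacc
    simp only [listVal]
    refine gfpSet_mono fun Y => lfpSet_mono fun X => ih ?_ ?_
    · exact Set.inter_subset_inter hQ subset_rfl
    · exact Set.union_subset_union hacc
        (Set.inter_subset_inter (Set.inter_subset_inter hQ subset_rfl) subset_rfl)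

theorem listVal_cons_mono {V : Type*} (Gm : LiveGameGraph V) (Gp Rp : ℕ → Set V)
    (p : ℕ) {l1 l2 : List ℕ}
    (h : ∀ Q acc, listVal Gm Gp Rp l1 Q acc ⊆ listVal Gm Gp Rp l2 Q acc)
    (Q acc : Set V) :
    listVal Gm Gp Rp (p :: l1) Q acc ⊆ listVal Gm Gp Rp (p :: l2) Q acc := by
  simp only [listVal]
  exact gfpSet_mono fun Y => lfpSet_mono fun X => h _ _

theorem listVal_swap {V : Type*} [Fintype V] (Gm : LiveGameGraph V) (Gp Rp : ℕ → Set V)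
    {a b : ℕ} (hR : Rp b ⊆ Rp a) (hG : Gp b ⊆ Gp a) (l : List ℕ) (Q acc : Set V) :
    listVal Gm Gp Rp (a :: b :: l) Q acc ⊆ listVal Gm Gp Rp (b :: a :: l) Q acc := by
  have hca : (Rp a)ᶜ ⊆ (Rp b)ᶜ := Set.compl_subset_compl.mpr hR
  have hQab : (Q ∩ (Rp a)ᶜ) ∩ (Rp b)ᶜ = Q ∩ (Rp a)ᶜ :=
    Set.inter_eq_left.mpr fun x hx => hca hx.2
  have hQba : (Q ∩ (Rp b)ᶜ) ∩ (Rp a)ᶜ = Q ∩ (Rp a)ᶜ := by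
    ext x
    constructor
    · rintro ⟨⟨hxQ, _⟩, hxa⟩; exact ⟨hxQ, hxa⟩
    · rintro ⟨hxQ, hxa⟩; exact ⟨⟨hxQ, hca hxa⟩, hxa⟩
  simp only [listVal, hQab, hQba, Set.union_assoc]
  exact swap_abstract
    (fun S => listVal Gm Gp Rp l (Q ∩ (Rp a)ᶜ) (acc ∪ S))
    (fun Y X => (Q ∩ (Rp a)ᶜ) ∩ ((Gp a ∩ Gm.cpre Y) ∪ Gm.apre Y X))
    (fun Y X => (Q ∩ (Rp a)ᶜ) ∩ ((Gp b ∩ Gm.cpre Y) ∪ Gm.apre Y X))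
    (fun Y X => (Q ∩ (Rp b)ᶜ) ∩ ((Gp b ∩ Gm.cpre Y) ∪ Gm.apre Y X))
    (fun S S' h => listVal_mono Gm Gp Rp l subset_rfl (Set.union_subset_union subset_rfl h))
    (fun hY hX => Gm.C_mono _ _ hY hX)
    (fun hY hX => Gm.C_mono _ _ hY hX)
    (fun hY hX => Gm.C_mono _ _ hY hX)
    (fun {Y Y' X} hY =>
      Set.inter_subset_inter subset_rfl
        (Set.union_subset_union (Set.inter_subset_inter hG (Gm.cpre_mono hY))
          (Gm.apre_mono hY subset_rfl)))


/-! ### Descending sort of a finset and its properties -/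

def dsort (s : Finset ℕ) : List ℕ := (Finset.sort s (· ≤ ·)).reverse

theorem dsort_sorted (s : Finset ℕ) : List.Pairwise (· ≥ ·) (dsort s) := by
  rw [dsort, List.pairwise_reverse]
  exact Finset.pairwise_sort s (· ≤ ·)

theorem mem_dsort {s : Finset ℕ} {x : ℕ} : x ∈ dsort s ↔ x ∈ s := by
  rw [dsort, List.mem_reverse, Finset.mem_sort]

theorem dsort_perm (s : Finset ℕ) : (dsort s).Perm s.toList :=
  (List.reverse_perm _).trans (Finset.sort_perm_toList s _)

theorem toList_perm_cons_erase {s : Finset ℕ} {p : ℕ} (hp : p ∈ s) :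
    s.toList.Perm (p :: (s.erase p).toList) := by
  rw [← Multiset.coe_eq_coe]
  show (↑s.toList : Multiset ℕ) = ↑(p :: (s.erase p).toList)
  rw [← Multiset.cons_coe]
  show (↑(s.val.toList) : Multiset ℕ) = p ::ₘ ↑((s.erase p).val.toList)
  rw [Multiset.coe_toList, Multiset.coe_toList, Finset.erase_val]
  exact (Multiset.cons_erase (Finset.mem_def.mp hp)).symm

theorem eq_of_perm_of_sorted {l₁ l₂ : List ℕ} (hp : l₁.Perm l₂)
    (h₁ : List.Pairwise (· ≥ ·) l₁) (h₂ : List.Pairwise (· ≥ ·) l₂) : l₁ = l₂ :=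
  List.Perm.eq_of_pairwise' h₁ h₂ hp

theorem dsort_insert {s : Finset ℕ} {p : ℕ} (hp : p ∈ s) :
    List.orderedInsert (· ≥ ·) p (dsort (s.erase p)) = dsort s := by
  refine eq_of_perm_of_sorted ?_ ((dsort_sorted _).orderedInsert p _) (dsort_sorted s)
  exact (((List.perm_orderedInsert _ p _).trans ((dsort_perm _).cons p)).trans
    (toList_perm_cons_erase hp).symm).trans (dsort_perm s).symm

theorem dsort_max_cons {s : Finset ℕ} {m : ℕ} (hm : m ∈ s) (hmax : ∀ x ∈ s, x ≤ m) :
    dsort s = m :: dsort (s.erase m) := by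
  refine eq_of_perm_of_sorted ?_ (dsort_sorted s) ?_
  · exact ((dsort_perm s).trans (toList_perm_cons_erase hm)).trans ((dsort_perm _).symm.cons m)
  · rw [List.pairwise_cons]
    refine ⟨fun b hb => ?_, dsort_sorted _⟩
    exact hmax b (Finset.mem_of_mem_erase (mem_dsort.mp hb))

/-! ### Transitivity of the chain condition -/

theorem chain_trans {α : Type*} (f : ℕ → Set α) (k : ℕ)
    (h : ∀ j, 1 ≤ j → j < k → f (j + 1) ⊆ f j) :
    ∀ a b, 1 ≤ a → a ≤ b → b ≤ k → f b ⊆ f a := by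
  intro a b ha
  induction b with
  | zero => intro hab _; exact absurd (ha.trans hab) (by omega)
  | succ n ihn =>
    intro hab hbk
    by_cases hc : a = n + 1
    · subst hc; exact subset_rfl
    · exact (h n (by omega) (by omega)).trans (ihn (by omega) (by omega))

/-! ### Insertion lemma -/

theorem listVal_insert {V : Type*} [Fintype V] (Gm : LiveGameGraph V) (Gp Rp : ℕ → Set V)
    (k : ℕ)
    (hRt : ∀ a b, 1 ≤ a → a ≤ b → b ≤ k → Rp b ⊆ Rp a)
    (hGt : ∀ a b, 1 ≤ a → a ≤ b → b ≤ k → Gp b ⊆ Gp a) :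
    ∀ (l : List ℕ) (p : ℕ), 1 ≤ p → p ≤ k → (∀ x ∈ l, 1 ≤ x ∧ x ≤ k) →
      List.Pairwise (· ≥ ·) l → p ∉ l → ∀ Q acc,
      listVal Gm Gp Rp (p :: l) Q acc ⊆
        listVal Gm Gp Rp (List.orderedInsert (· ≥ ·) p l) Q acc := by
  intro l
  induction l with
  | nil =>
    intro p _ _ _ _ _ Q acc
    simp only [List.orderedInsert]
    exact subset_rfl
  | cons b t ih =>
    intro p hp1 hpk hbnd hsort hmem Q acc
    simp only [List.orderedInsert]
    by_cases hpb : p ≥ b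
    · rw [if_pos hpb]
    · rw [if_neg hpb]
      have hblt : p ≤ b := (lt_of_not_ge hpb).le
      have hbk : b ≤ k := (hbnd b List.mem_cons_self).2
      have h1 : listVal Gm Gp Rp (p :: b :: t) Q acc ⊆ listVal Gm Gp Rp (b :: p :: t) Q acc :=
        listVal_swap Gm Gp Rp (hRt p b hp1 hblt hbk) (hGt p b hp1 hblt hbk) t Q acc
      refine h1.trans ?_
      refine listVal_cons_mono Gm Gp Rp b (fun Q' acc' => ih p hp1 hpk ?_ ?_ ?_ Q' acc') Q acc
      · exact fun x hx => hbnd x (List.mem_cons_of_mem b hx)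
      · exact hsort.of_cons
      · exact fun hx => hmem (List.mem_cons_of_mem b hx)

/-! ### The permutation fixpoint equals the sorted-list fixpoint -/

theorem rabin_eq {V : Type*} [Fintype V] (Gm : LiveGameGraph V) (Gp Rp : ℕ → Set V) (k : ℕ)
    (hRt : ∀ a b, 1 ≤ a → a ≤ b → b ≤ k → Rp b ⊆ Rp a)
    (hGt : ∀ a b, 1 ≤ a → a ≤ b → b ≤ k → Gp b ⊆ Gp a) :
    ∀ (n : ℕ) (avail : Finset ℕ), avail.card = n → (∀ x ∈ avail, 1 ≤ x ∧ x ≤ k) →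
      ∀ Q acc, Gm.rabinAux Gp Rp n avail Q acc = listVal Gm Gp Rp (dsort avail) Q acc := by
  intro n
  induction n with
  | zero =>
    intro avail hcard _ Q acc
    rw [Finset.card_eq_zero] at hcard
    subst hcard
    show acc = listVal Gm Gp Rp (dsort ∅) Q acc
    rw [show dsort ∅ = [] by simp [dsort]]
    rfl
  | succ n ih =>
    intro avail hcard hbnd Q acc
    have hmem : ∀ p ∈ avail,
        (gfpSet fun Y => lfpSet fun X =>
          Gm.rabinAux Gp Rp n (avail.erase p) (Q ∩ (Rp p)ᶜ)
            (acc ∪ ((Q ∩ (Rp p)ᶜ) ∩ ((Gp p ∩ Gm.cpre Y) ∪ Gm.apre Y X)))) =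
        listVal Gm Gp Rp (p :: dsort (avail.erase p)) Q acc := by
      intro p hp
      simp only [listVal]
      refine congrArg gfpSet (funext fun Y => congrArg lfpSet (funext fun X => ?_))
      exact ih (avail.erase p) (by rw [Finset.card_erase_of_mem hp, hcard]; rfl)
        (fun x hx => hbnd x (Finset.mem_of_mem_erase hx)) _ _
    show (⋃ p ∈ avail, gfpSet fun Y => lfpSet fun X =>
          Gm.rabinAux Gp Rp n (avail.erase p) (Q ∩ (Rp p)ᶜ)
            (acc ∪ ((Q ∩ (Rp p)ᶜ) ∩ ((Gp p ∩ Gm.cpre Y) ∪ Gm.apre Y X)))) =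
        listVal Gm Gp Rp (dsort avail) Q acc
    rw [Set.iUnion₂_congr hmem]
    apply subset_antisymm
    · apply Set.iUnion₂_subset
      intro p hp
      have h2 := listVal_insert Gm Gp Rp k hRt hGt (dsort (avail.erase p)) p
        (hbnd p hp).1 (hbnd p hp).2
        (fun x hx => hbnd x (Finset.mem_of_mem_erase (mem_dsort.mp hx)))
        (dsort_sorted _)
        (fun hx => Finset.notMem_erase p avail (mem_dsort.mp hx)) Q acc
      rwa [dsort_insert hp] at h2
    · have hne : avail.Nonempty := by
        rw [← Finset.card_pos, hcard]; omega
      rw [dsort_max_cons (avail.max'_mem hne) (fun x hx => Finset.le_max' avail x hx)]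
      exact Set.subset_iUnion₂
        (s := fun p (_ : p ∈ avail) => listVal Gm Gp Rp (p :: dsort (avail.erase p)) Q acc)
        (avail.max' hne) (avail.max'_mem hne)

/-! ### The chain fixpoint equals the sorted-list fixpoint -/

theorem chain_eq {V : Type*} (Gm : LiveGameGraph V) (Gp Rp : ℕ → Set V) (k : ℕ)
    (hchainR : ∀ j, 1 ≤ j → j < k → Rp (j + 1) ⊆ Rp j) :
    ∀ j, j ≤ k → ∀ (Q acc : Set V), (1 ≤ j → (Rp j)ᶜ ⊆ Q) →
      Gm.chainAux Gp Rp j acc = listVal Gm Gp Rp (dsort (Finset.Icc 1 j)) Q acc := by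
  intro j
  induction j with
  | zero =>
    intro _ Q acc _
    show acc = listVal Gm Gp Rp (dsort (Finset.Icc 1 0)) Q acc
    rw [show Finset.Icc 1 0 = ∅ from Finset.Icc_eq_empty (by omega)]
    rw [show dsort ∅ = [] by simp [dsort]]
    rfl
  | succ j ihj =>
    intro hjk Q acc hQ
    have h1 : (Finset.Icc 1 (j + 1)).erase (j + 1) = Finset.Icc 1 j := by
      rw [Finset.Icc_erase_right]
      exact Finset.Ico_add_one_right_eq_Icc 1 j
    have hmax : dsort (Finset.Icc 1 (j + 1)) = (j + 1) :: dsort (Finset.Icc 1 j) := by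
      rw [← h1]
      exact dsort_max_cons (Finset.mem_Icc.mpr ⟨by omega, le_rfl⟩)
        (fun x hx => (Finset.mem_Icc.mp hx).2)
    rw [hmax]
    have hQeq : Q ∩ (Rp (j + 1))ᶜ = (Rp (j + 1))ᶜ := Set.inter_eq_right.mpr (hQ (by omega))
    simp only [listVal, hQeq, LiveGameGraph.chainAux]
    refine congrArg gfpSet (funext fun Y => congrArg lfpSet (funext fun X => ?_))
    exact ihj (by omega) ((Rp (j + 1))ᶜ) _
      (fun hj1 => Set.compl_subset_compl.mpr (hchainR j hj1 (by omega)))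

/-- under the chain condition, the permutation-based Rabin fixpoint
equals the chain fixpoint. -/
theorem rabin_fixpoint_eq_chain_fixpoint {V : Type*} [Fintype V]
    (Gm : LiveGameGraph V) (k : ℕ) (Gp Rp : ℕ → Set V)
    (hchainR : ∀ j, 1 ≤ j → j < k → Rp (j + 1) ⊆ Rp j)
    (hchainG : ∀ j, 1 ≤ j → j < k → Gp (j + 1) ⊆ Gp j) :
    Gm.rabinZ Gp Rp k = Gm.chainZ Gp Rp k := by
  have hRt := chain_trans Rp k hchainR
  have hGt := chain_trans Gp k hchainG
  unfold LiveGameGraph.rabinZ LiveGameGraph.chainZ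
  refine congrArg gfpSet (funext fun Y0 => congrArg lfpSet (funext fun X0 => ?_))
  rw [rabin_eq Gm Gp Rp k hRt hGt k (Finset.Icc 1 k) (by rw [Nat.card_Icc]; omega)
      (fun x hx => by
        have h := Finset.mem_Icc.mp hx
        exact ⟨h.1, h.2⟩)]
  exact (chain_eq Gm Gp Rp k hchainR k le_rfl _ _ (fun _ => by simp)).symm
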